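/- For G_N in the class 𝒢_{β,γ} with β+2γ<1, the maximum over all connected components of G_N of the graph diameter of the component is O_P(log N), i.e. there is a constant C such that with probability tending to 1 every component has diameter at most C log N. -/

import Mathlib

open scoped BigOperators Classical
open MeasureTheory Filter

noncomputable section

namespace VoterIRG

/-! ### Inhomogeneous random graphs -/

/-- Chung–Lu connection probabilities `p_{ij} = min(β N^{2γ-1} i^{-γ} j^{-γ}, 1)`,
where the vertex `i : Fin N` carries the label `i+1 ∈ {1, …, N}`. -/
def pCL (β γ : ℝ) (N : ℕ) (i j : Fin N) : ℝ :=
  min (β * (N : ℝ) ^ (2 * γ - 1) * ((i : ℕ) + 1 : ℝ) ^ (-γ) * ((j : ℕ) + 1 : ℝ) ^ (-γ)) 1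

/-- Index set of potential edges on `Fin N`. -/
abbrev EdgeIdx (N : ℕ) := {p : Fin N × Fin N // p.1 < p.2}

/-- An edge configuration: which potential edges are present. -/
abbrev EdgeConf (N : ℕ) := EdgeIdx N → Bool

/-- The simple graph determined by an edge configuration. -/
def graphOf {N : ℕ} (ω : EdgeConf N) : SimpleGraph (Fin N) where
  Adj i j := (∃ h : i < j, ω ⟨(i, j), h⟩ = true) ∨ ∃ h : j < i, ω ⟨(j, i), h⟩ = true
  symm := ⟨fun i j h => h.symm⟩
  loopless := ⟨fun i h => by
    rcases h with ⟨h, _⟩ | ⟨h, _⟩ <;> exact absurd h (lt_irrefl i)⟩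

/-- The degree of the vertex `i`. -/
def deg {N : ℕ} (ω : EdgeConf N) (i : Fin N) : ℕ :=
  ∑ j, if (graphOf ω).Adj i j then 1 else 0

/-- A member of the class `𝒢_{β,γ}` of subcritical inhomogeneous random graph models:
for each `N`, edges are present independently, with probabilities `q` lying in
`(0, 1/2)` that approximate the Chung–Lu probabilities `p` in the sense that
`∑_{i≠j} (p_{ij} - q_{ij})² / p_{ij} → 0`. -/
structure IRGModel (β γ : ℝ) where
  q : (N : ℕ) → Fin N → Fin N → ℝ
  q_symm : ∀ N (i j : Fin N), q N i j = q N j i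
  q_mem : ∀ N (i j : Fin N), q N i j ∈ Set.Ioo (0 : ℝ) (1 / 2)
  law : (N : ℕ) → Measure (EdgeConf N)
  law_prob : ∀ N, IsProbabilityMeasure (law N)
  law_indep : ∀ N (σ : EdgeConf N),
    law N {σ} = ∏ e : EdgeIdx N,
      (if σ e then ENNReal.ofReal (q N e.val.1 e.val.2)
       else ENNReal.ofReal (1 - q N e.val.1 e.val.2))
  q_approx : Tendsto
    (fun N => ∑ i : Fin N, ∑ j : Fin N,
      if i ≠ j then (pCL β γ N i j - q N i j) ^ 2 / pCL β γ N i j else 0)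
    atTop (nhds 0)

/-- `K_γ = N^{(1-2γ)/(2-2γ)} log N`. -/
def Kgamma (γ : ℝ) (N : ℕ) : ℝ :=
  (N : ℝ) ^ ((1 - 2 * γ) / (2 - 2 * γ)) * Real.log N

/-- The vertex `k` (with label `k+1`) indexes a big component, i.e. `k + 1 ≤ K_γ`. -/
def BigIdx (γ : ℝ) {N : ℕ} (k : Fin N) : Prop :=
  ((k : ℕ) + 1 : ℝ) ≤ Kgamma γ N

/-- The vertex `i` lies in a big component. -/
def InBigComp (γ : ℝ) {N : ℕ} (ω : EdgeConf N) (i : Fin N) : Prop :=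
  ∃ k : Fin N, BigIdx γ k ∧ (graphOf ω).Reachable k i

/-- Total degree of the component of `k`. -/
def compDegSum {N : ℕ} (ω : EdgeConf N) (k : Fin N) : ℝ :=
  ∑ z, if (graphOf ω).Reachable k z then (deg ω z : ℝ) else 0

/-- Empirical `η`-th degree moment of the component of `k`. -/
def compMoment {N : ℕ} (ω : EdgeConf N) (k : Fin N) (η : ℝ) : ℝ :=
  ∑ z, if (graphOf ω).Reachable k z then (deg ω z : ℝ) ^ η else 0

/-- The component of `k` is a tree. -/
def TreeComp {N : ℕ} (ω : EdgeConf N) (k : Fin N) : Prop :=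
  ((graphOf ω).induce {v | (graphOf ω).Reachable k v}).IsTree

/-- `w` belongs to the branch of `v` (connectedness avoiding the root `r`). -/
def InBranch {N : ℕ} (ω : EdgeConf N) (r v w : Fin N) : Prop :=
  Relation.ReflTransGen (fun a b => (graphOf ω).Adj a b ∧ a ≠ r ∧ b ≠ r) v w

/-- The number of vertices of the branch of `v` (avoiding the root `r`). -/
def branchSize {N : ℕ} (ω : EdgeConf N) (r v : Fin N) : ℝ :=
  ∑ w, if InBranch ω r v w then (1 : ℝ) else 0

/-- Total degree of the branch of `v` (avoiding the root `r`). -/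
def branchDegSum {N : ℕ} (ω : EdgeConf N) (r v : Fin N) : ℝ :=
  ∑ w, if InBranch ω r v w then (deg ω w : ℝ) else 0

/-- The number of neighbours of `k` having degree 1. -/
def leafCount {N : ℕ} (ω : EdgeConf N) (k : Fin N) : ℕ :=
  ∑ j, if (graphOf ω).Adj k j ∧ deg ω j = 1 then 1 else 0



/-! ### Auxiliary lemmas for the diameter bound -/

section Aux

lemma edgeConf_measurable {N : ℕ} (s : Set (EdgeConf N)) : MeasurableSet s :=
  s.to_countable.measurableSet

lemma measure_allTrue {N : ℕ} (μ : Measure (EdgeConf N)) (q : EdgeIdx N → ℝ)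
    (hq : ∀ e, q e ∈ Set.Ioo (0:ℝ) (1/2))
    (hμ : ∀ σ : EdgeConf N, μ {σ} = ∏ e : EdgeIdx N,
      (if σ e then ENNReal.ofReal (q e) else ENNReal.ofReal (1 - q e)))
    (E : Finset (EdgeIdx N)) :
    μ {ω | ∀ e ∈ E, ω e = true} = ∏ e ∈ E, ENNReal.ofReal (q e) := by
  classical
  set S : Set (EdgeConf N) := {ω | ∀ e ∈ E, ω e = true}
  have hS : S = ⋃ σ ∈ Finset.univ.filter (· ∈ S), ({σ} : Set (EdgeConf N)) := by
    ext ω; simp [S]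
  have hdisj : (↑(Finset.univ.filter (· ∈ S)) : Set (EdgeConf N)).PairwiseDisjoint
      (fun σ => ({σ} : Set (EdgeConf N))) := fun a _ b _ hab => by
    simp [Set.disjoint_singleton, hab]
  have h1 : μ S = ∑ σ ∈ Finset.univ.filter (· ∈ S), μ {σ} := by
    conv_lhs => rw [hS]
    rw [measure_biUnion_finset hdisj (fun σ _ => edgeConf_measurable _)]
  set W : EdgeIdx N → Bool → ENNReal := fun e b =>
    if e ∈ E ∧ b = false then 0 else
      (if b then ENNReal.ofReal (q e) else ENNReal.ofReal (1 - q e)) with hW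
  have key : ∀ σ : EdgeConf N,
      (∏ e : EdgeIdx N, W e (σ e)) = if σ ∈ S then μ {σ} else 0 := by
    intro σ
    by_cases hσ : σ ∈ S
    · rw [if_pos hσ, hμ]
      refine Finset.prod_congr rfl fun e _ => ?_
      by_cases he : e ∈ E
      · have : σ e = true := hσ e he
        simp [hW, this]
      · simp [hW, he]
    · rw [if_neg hσ]
      obtain ⟨e, heE, hef⟩ : ∃ e ∈ E, σ e = false := by
        by_contra h
        push_neg at h
        exact hσ (fun e he => by simpa using h e he)
      refine Finset.prod_eq_zero (Finset.mem_univ e) ?_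
      simp [hW, heE, hef]
  have h2 : μ S = ∑ σ : EdgeConf N, ∏ e : EdgeIdx N, W e (σ e) := by
    rw [h1]
    rw [Finset.sum_filter]
    refine Finset.sum_congr rfl fun σ _ => ?_
    rw [key σ]
  have h3 : ∑ σ : EdgeConf N, ∏ e : EdgeIdx N, W e (σ e)
      = ∏ e : EdgeIdx N, ∑ b : Bool, W e b := by
    rw [Finset.prod_univ_sum (fun _ => (Finset.univ : Finset Bool)) W]
    rw [Fintype.piFinset_univ]
  have h4 : ∀ e : EdgeIdx N, (∑ b : Bool, W e b)
      = if e ∈ E then ENNReal.ofReal (q e) else 1 := by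
    intro e
    rw [Fintype.sum_bool]
    by_cases he : e ∈ E
    · simp [hW, he]
    · simp only [hW, he, false_and, if_false, if_true, if_neg (Bool.false_ne_true)]
      rw [← ENNReal.ofReal_add (hq e).1.le (by have := (hq e).2; linarith)]
      norm_num
  rw [h2, h3]
  rw [Finset.prod_congr rfl (fun e _ => h4 e), Finset.prod_ite_mem, Finset.univ_inter]

variable {n : ℕ}

/-- ℓ² norm of a finite vector. -/
def norm2 (f : Fin n → ℝ) : ℝ := Real.sqrt (∑ x, f x ^ 2)

lemma norm2_nonneg (f : Fin n → ℝ) : 0 ≤ norm2 f := Real.sqrt_nonneg _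

lemma sq_norm2 (f : Fin n → ℝ) : norm2 f ^ 2 = ∑ x, f x ^ 2 := by
  rw [norm2, Real.sq_sqrt]
  positivity

lemma cauchy_sum (f g : Fin n → ℝ) (hf : ∀ x, 0 ≤ f x) (hg : ∀ x, 0 ≤ g x) :
    ∑ x, f x * g x ≤ norm2 f * norm2 g := by
  have h := Finset.sum_mul_sq_le_sq_mul_sq Finset.univ f g
  have h0 : 0 ≤ ∑ x, f x * g x := Finset.sum_nonneg fun x _ => mul_nonneg (hf x) (hg x)
  have := Real.sqrt_le_sqrt h
  rw [Real.sqrt_sq h0, Real.sqrt_mul (by positivity)] at this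
  simpa [norm2] using this

lemma minkowski (a b : Fin n → ℝ) :
    Real.sqrt (∑ x, (a x + b x) ^ 2) ≤ norm2 a + norm2 b := by
  have hab : ∑ x, a x * b x ≤ norm2 a * norm2 b := by
    have h := Finset.sum_mul_sq_le_sq_mul_sq Finset.univ a b
    calc ∑ x, a x * b x ≤ |∑ x, a x * b x| := le_abs_self _
      _ = Real.sqrt ((∑ x, a x * b x) ^ 2) := (Real.sqrt_sq_eq_abs _).symm
      _ ≤ Real.sqrt ((∑ x, a x ^ 2) * ∑ x, b x ^ 2) := Real.sqrt_le_sqrt h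
      _ = norm2 a * norm2 b := Real.sqrt_mul (by positivity) _
  have : ∑ x, (a x + b x) ^ 2 ≤ (norm2 a + norm2 b) ^ 2 := by
    have expand : ∑ x, (a x + b x) ^ 2
        = (∑ x, a x ^ 2) + 2 * (∑ x, a x * b x) + ∑ x, b x ^ 2 := by
      rw [Finset.mul_sum, ← Finset.sum_add_distrib, ← Finset.sum_add_distrib]
      refine Finset.sum_congr rfl fun x _ => by ring
    rw [expand, add_sq, sq_norm2, sq_norm2]
    nlinarith [hab]
  calc Real.sqrt (∑ x, (a x + b x) ^ 2) ≤ Real.sqrt ((norm2 a + norm2 b) ^ 2) :=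
        Real.sqrt_le_sqrt this
    _ = norm2 a + norm2 b := Real.sqrt_sq (add_nonneg (norm2_nonneg a) (norm2_nonneg b))

lemma norm2_mono (a b : Fin n → ℝ) (ha : ∀ x, 0 ≤ a x) (hab : ∀ x, a x ≤ b x) :
    norm2 a ≤ norm2 b := by
  apply Real.sqrt_le_sqrt
  exact Finset.sum_le_sum fun x _ => by
    have := ha x; have := hab x
    nlinarith

lemma step_bound (Q D : Fin n → Fin n → ℝ) (w f : Fin n → ℝ) (c : ℝ)
    (hQ0 : ∀ x y, 0 ≤ Q x y) (hQle : ∀ x y, Q x y ≤ c * w x * w y + D x y)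
    (hD0 : ∀ x y, 0 ≤ D x y) (hw0 : ∀ x, 0 ≤ w x) (hc : 0 ≤ c)
    (hf : ∀ x, 0 ≤ f x) :
    norm2 (fun x => ∑ y, Q x y * f y)
      ≤ (c * (∑ y, w y ^ 2) + Real.sqrt (∑ x, ∑ y, D x y ^ 2)) * norm2 f := by
  set T : ℝ := ∑ y, w y * f y with hT
  have hT0 : 0 ≤ T := Finset.sum_nonneg fun y _ => mul_nonneg (hw0 y) (hf y)
  set Dv : Fin n → ℝ := fun x => ∑ y, D x y * f y with hDv
  have hDv0 : ∀ x, 0 ≤ Dv x := fun x => Finset.sum_nonneg fun y _ => mul_nonneg (hD0 x y) (hf y)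
  have hg0 : ∀ x, 0 ≤ ∑ y, Q x y * f y :=
    fun x => Finset.sum_nonneg fun y _ => mul_nonneg (hQ0 x y) (hf y)
  have hgle : ∀ x, (∑ y, Q x y * f y) ≤ c * w x * T + Dv x := by
    intro x
    have : ∑ y, Q x y * f y ≤ ∑ y, (c * w x * w y + D x y) * f y :=
      Finset.sum_le_sum fun y _ => mul_le_mul_of_nonneg_right (hQle x y) (hf y)
    calc ∑ y, Q x y * f y ≤ ∑ y, (c * w x * w y + D x y) * f y := this
      _ = c * w x * T + Dv x := by
        rw [hT, hDv]
        rw [Finset.mul_sum, ← Finset.sum_add_distrib]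
        refine Finset.sum_congr rfl fun y _ => by ring
  have h1 : norm2 (fun x => ∑ y, Q x y * f y) ≤ Real.sqrt (∑ x, (c * w x * T + Dv x) ^ 2) :=
    norm2_mono _ _ hg0 hgle
  have h2 : Real.sqrt (∑ x, (c * w x * T + Dv x) ^ 2)
      ≤ norm2 (fun x => c * w x * T) + norm2 Dv := minkowski _ _
  have h3 : norm2 (fun x => c * w x * T) = c * T * norm2 w := by
    rw [norm2, norm2]
    rw [show ∑ x, (c * w x * T) ^ 2 = (c * T) ^ 2 * ∑ x, w x ^ 2 by
      rw [Finset.mul_sum]; exact Finset.sum_congr rfl fun x _ => by ring]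
    rw [Real.sqrt_mul (by positivity), Real.sqrt_sq (by positivity)]
  have hTle : T ≤ norm2 w * norm2 f := cauchy_sum w f hw0 hf
  have h4 : norm2 Dv ≤ Real.sqrt (∑ x, ∑ y, D x y ^ 2) * norm2 f := by
    have hsq : ∀ x, Dv x ^ 2 ≤ (∑ y, D x y ^ 2) * ∑ y, f y ^ 2 := fun x =>
      Finset.sum_mul_sq_le_sq_mul_sq Finset.univ (fun y => D x y) f
    have : ∑ x, Dv x ^ 2 ≤ (∑ x, ∑ y, D x y ^ 2) * ∑ y, f y ^ 2 := by
      rw [Finset.sum_mul]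
      exact Finset.sum_le_sum fun x _ => hsq x
    calc norm2 Dv ≤ Real.sqrt ((∑ x, ∑ y, D x y ^ 2) * ∑ y, f y ^ 2) := Real.sqrt_le_sqrt this
      _ = Real.sqrt (∑ x, ∑ y, D x y ^ 2) * norm2 f := Real.sqrt_mul (by positivity) _
  have hw2 : norm2 w * norm2 w = ∑ y, w y ^ 2 := by
    rw [← sq]; exact sq_norm2 w
  calc norm2 (fun x => ∑ y, Q x y * f y)
      ≤ c * T * norm2 w + norm2 Dv := by rw [← h3]; exact h1.trans h2
    _ ≤ c * (norm2 w * norm2 f) * norm2 w + Real.sqrt (∑ x, ∑ y, D x y ^ 2) * norm2 f := by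
        refine add_le_add ?_ h4
        refine mul_le_mul_of_nonneg_right ?_ (norm2_nonneg w)
        exact mul_le_mul_of_nonneg_left hTle hc
    _ = (c * (∑ y, w y ^ 2) + Real.sqrt (∑ x, ∑ y, D x y ^ 2)) * norm2 f := by
        rw [← hw2]; ring

/-- Iterated matrix-vector product with the all-ones start. -/
def vec (Q : Fin n → Fin n → ℝ) : ℕ → Fin n → ℝ
  | 0 => fun _ => 1
  | (t+1) => fun x => ∑ y, Q x y * vec Q t y

lemma pathSum_eq (Q : Fin n → Fin n → ℝ) (t : ℕ) (φ : Fin n → ℝ) :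
    ∑ v : Fin (t+1) → Fin n, φ (v 0) * ∏ k : Fin t, Q (v k.castSucc) (v k.succ)
      = ∑ x, φ x * vec Q t x := by
  induction t generalizing φ with
  | zero =>
    rw [← (Equiv.funUnique (Fin 1) (Fin n)).symm.sum_comp
      (fun v => φ (v 0) * ∏ k : Fin 0, Q (v k.castSucc) (v k.succ))]
    simp [vec, Equiv.funUnique]
  | succ t ih =>
    rw [← (Fin.consEquiv (fun _ : Fin (t+2) => Fin n)).sum_comp
      (fun v => φ (v 0) * ∏ k : Fin (t+1), Q (v k.castSucc) (v k.succ))]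
    rw [Fintype.sum_prod_type]
    have hterm : ∀ (x : Fin n) (u : Fin (t+1) → Fin n),
        φ (((Fin.consEquiv (fun _ : Fin (t+2) => Fin n)) (x, u)) 0) *
          ∏ k : Fin (t+1), Q (((Fin.consEquiv (fun _ : Fin (t+2) => Fin n)) (x, u)) k.castSucc)
            (((Fin.consEquiv (fun _ : Fin (t+2) => Fin n)) (x, u)) k.succ)
        = (φ x * Q x (u 0)) * ∏ k : Fin t, Q (u k.castSucc) (u k.succ) := by
      intro x u
      have hv : ((Fin.consEquiv (fun _ : Fin (t+2) => Fin n)) (x, u) : Fin (t+2) → Fin n)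
          = Fin.cons x u := by
        ext m; simp [Fin.consEquiv]
      rw [Fin.prod_univ_succ]
      simp only [hv]
      have h0 : (Fin.cons x u : Fin (t+2) → Fin n) ((0 : Fin (t+1)).castSucc) = x := by
        simp
      have h1 : (Fin.cons x u : Fin (t+2) → Fin n) ((0 : Fin (t+1)).succ) = u 0 := by
        simp
      have h2 : ∀ k : Fin t,
          Q ((Fin.cons x u : Fin (t+2) → Fin n) (k.succ.castSucc))
            ((Fin.cons x u : Fin (t+2) → Fin n) (k.succ.succ))
          = Q (u k.castSucc) (u k.succ) := by
        intro k
        rw [← Fin.succ_castSucc]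
        simp [Fin.cons_succ]
      rw [h0, h1]
      rw [Finset.prod_congr rfl (fun k _ => h2 k)]
      have hcons0 : (Fin.cons x u : Fin (t+2) → Fin n) 0 = x := by simp
      rw [hcons0]
      ring
    calc ∑ x, ∑ u : Fin (t+1) → Fin n,
          φ (((Fin.consEquiv (fun _ : Fin (t+2) => Fin n)) (x, u)) 0) *
          ∏ k : Fin (t+1), Q (((Fin.consEquiv (fun _ : Fin (t+2) => Fin n)) (x, u)) k.castSucc)
            (((Fin.consEquiv (fun _ : Fin (t+2) => Fin n)) (x, u)) k.succ)
        = ∑ x, ∑ u : Fin (t+1) → Fin n,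
            (φ x * Q x (u 0)) * ∏ k : Fin t, Q (u k.castSucc) (u k.succ) := by
          exact Finset.sum_congr rfl fun x _ => Finset.sum_congr rfl fun u _ => hterm x u
      _ = ∑ u : Fin (t+1) → Fin n,
            (∑ x, φ x * Q x (u 0)) * ∏ k : Fin t, Q (u k.castSucc) (u k.succ) := by
          rw [Finset.sum_comm]
          exact Finset.sum_congr rfl fun u _ => by rw [Finset.sum_mul]
      _ = ∑ y, (∑ x, φ x * Q x y) * vec Q t y := ih (fun y => ∑ x, φ x * Q x y)
      _ = ∑ x, φ x * vec Q (t+1) x := by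
          have hv : ∀ x, vec Q (t+1) x = ∑ y, Q x y * vec Q t y := fun _ => rfl
          simp_rw [hv, Finset.sum_mul, Finset.mul_sum]
          rw [Finset.sum_comm]
          exact Finset.sum_congr rfl fun x _ => Finset.sum_congr rfl fun y _ => by ring

lemma vec_nonneg (Q : Fin n → Fin n → ℝ) (hQ0 : ∀ x y, 0 ≤ Q x y) :
    ∀ t x, 0 ≤ vec Q t x := by
  intro t
  induction t with
  | zero => intro x; norm_num [vec]
  | succ t ih =>
    intro x
    exact Finset.sum_nonneg fun y _ => mul_nonneg (hQ0 x y) (ih y)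

lemma norm2_ones : norm2 (fun _ : Fin n => (1:ℝ)) = Real.sqrt n := by
  simp [norm2]

lemma pathSum_le (Q D : Fin n → Fin n → ℝ) (w : Fin n → ℝ) (c : ℝ)
    (hQ0 : ∀ x y, 0 ≤ Q x y) (hQle : ∀ x y, Q x y ≤ c * w x * w y + D x y)
    (hD0 : ∀ x y, 0 ≤ D x y) (hw0 : ∀ x, 0 ≤ w x) (hc : 0 ≤ c) (t : ℕ) :
    ∑ v : Fin (t+1) → Fin n, ∏ k : Fin t, Q (v k.castSucc) (v k.succ)
      ≤ n * (c * (∑ y, w y ^ 2) + Real.sqrt (∑ x, ∑ y, D x y ^ 2)) ^ t := by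
  set K : ℝ := c * (∑ y, w y ^ 2) + Real.sqrt (∑ x, ∑ y, D x y ^ 2) with hK
  have hK0 : 0 ≤ K := by
    apply add_nonneg
    · exact mul_nonneg hc (Finset.sum_nonneg fun y _ => sq_nonneg _)
    · exact Real.sqrt_nonneg _
  have hnorm : ∀ t, norm2 (vec Q t) ≤ K ^ t * Real.sqrt n := by
    intro t
    induction t with
    | zero =>
      rw [show vec Q 0 = (fun _ : Fin n => (1:ℝ)) from rfl, norm2_ones, pow_zero, one_mul]
    | succ t ih =>
      have hstep := step_bound Q D w (vec Q t) c hQ0 hQle hD0 hw0 hc (vec_nonneg Q hQ0 t)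
      calc norm2 (vec Q (t+1)) = norm2 (fun x => ∑ y, Q x y * vec Q t y) := rfl
        _ ≤ K * norm2 (vec Q t) := hstep
        _ ≤ K * (K ^ t * Real.sqrt n) := mul_le_mul_of_nonneg_left ih hK0
        _ = K ^ (t+1) * Real.sqrt n := by ring
  have heq := pathSum_eq Q t (fun _ => (1:ℝ))
  simp only [one_mul] at heq
  rw [heq]
  have hch : ∑ x, vec Q t x ≤ norm2 (fun _ : Fin n => (1:ℝ)) * norm2 (vec Q t) := by
    have := cauchy_sum (fun _ : Fin n => (1:ℝ)) (vec Q t)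
      (fun _ => zero_le_one) (vec_nonneg Q hQ0 t)
    simpa using this
  calc ∑ x, vec Q t x ≤ norm2 (fun _ : Fin n => (1:ℝ)) * norm2 (vec Q t) := hch
    _ ≤ Real.sqrt n * (K ^ t * Real.sqrt n) := by
        rw [norm2_ones]
        exact mul_le_mul_of_nonneg_left (hnorm t) (Real.sqrt_nonneg _)
    _ = (Real.sqrt n * Real.sqrt n) * K ^ t := by ring
    _ = n * K ^ t := by rw [Real.mul_self_sqrt (Nat.cast_nonneg n)]

/-- getVert is injective on indices up to the length, for paths. -/
lemma getVert_inj {V : Type*} {G : SimpleGraph V} {u v : V} {p : G.Walk u v}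
    (hp : p.IsPath) : ∀ i ≤ p.length, ∀ j ≤ p.length,
      p.getVert i = p.getVert j → i = j := by
  induction p with
  | nil => intro i hi j hj _; simp at hi hj; omega
  | @cons a b c h q ih =>
    intro i hi j hj hij
    rw [SimpleGraph.Walk.cons_isPath_iff] at hp
    have hmem : ∀ m ≤ q.length, q.getVert m ∈ q.support := fun m hm =>
      SimpleGraph.Walk.mem_support_iff_exists_getVert.mpr ⟨m, rfl, hm⟩
    rcases i with _ | i <;> rcases j with _ | j
    · rfl
    · exfalso
      simp only [SimpleGraph.Walk.getVert_zero, SimpleGraph.Walk.getVert_cons_succ] at hij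
      exact hp.2 (hij ▸ hmem j (by simpa [SimpleGraph.Walk.length_cons] using hj))
    · exfalso
      simp only [SimpleGraph.Walk.getVert_zero, SimpleGraph.Walk.getVert_cons_succ] at hij
      exact hp.2 (hij ▸ hmem i (by simpa [SimpleGraph.Walk.length_cons] using hi))
    · simp only [SimpleGraph.Walk.getVert_cons_succ] at hij
      have := ih hp.1 i (by simpa [SimpleGraph.Walk.length_cons] using hi) j
        (by simpa [SimpleGraph.Walk.length_cons] using hj) hij
      omega

/-- The edge index of an unordered pair of distinct vertices. -/
def eIdx {N : ℕ} (a b : Fin N) (h : a ≠ b) : EdgeIdx N :=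
  if hlt : a < b then ⟨(a, b), hlt⟩ else ⟨(b, a), h.lt_or_gt.resolve_left hlt⟩

lemma eIdx_true_of_adj {N : ℕ} {ω : EdgeConf N} {a b : Fin N} (h : a ≠ b)
    (hadj : (graphOf ω).Adj a b) : ω (eIdx a b h) = true := by
  rcases hadj with ⟨hlt, hω⟩ | ⟨hlt, hω⟩
  · rwa [eIdx, dif_pos hlt]
  · rw [eIdx, dif_neg (asymm hlt)]
    exact hω

lemma eIdx_eq_cases {N : ℕ} {a b c d : Fin N} (hab : a ≠ b) (hcd : c ≠ d)
    (h : eIdx a b hab = eIdx c d hcd) : (a = c ∧ b = d) ∨ (a = d ∧ b = c) := by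
  rw [eIdx, eIdx] at h
  split_ifs at h <;>
  · rw [Subtype.ext_iff, Prod.ext_iff] at h
    tauto

end Aux

section ModelAux

variable {β γ : ℝ} (M : IRGModel β γ)

/-- Off-diagonal connection probability matrix. -/
def qmat (N : ℕ) (a b : Fin N) : ℝ := if a = b then 0 else M.q N a b

lemma qmat_nonneg (N : ℕ) (a b : Fin N) : 0 ≤ qmat M N a b := by
  rw [qmat]
  split_ifs with h
  · exact le_refl 0
  · exact (M.q_mem N a b).1.le

lemma q_of_eIdx (N : ℕ) (a b : Fin N) (h : a ≠ b) :
    M.q N (eIdx a b h).val.1 (eIdx a b h).val.2 = M.q N a b := by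
  rw [eIdx]
  split_ifs with hlt
  · rfl
  · exact M.q_symm N b a

/-- The probability that a given injective tuple forms a path. -/
lemma tuple_bound (N L : ℕ) (v : Fin (L+1) → Fin N) :
    M.law N {ω | Function.Injective v ∧
        ∀ k : Fin L, (graphOf ω).Adj (v k.castSucc) (v k.succ)}
      ≤ ENNReal.ofReal (∏ k : Fin L, qmat M N (v k.castSucc) (v k.succ)) := by
  classical
  by_cases hinj : Function.Injective v
  · have hne : ∀ k : Fin L, v k.castSucc ≠ v k.succ := by
      intro k hEq
      have := hinj hEq
      have : (k.castSucc : ℕ) = (k.succ : ℕ) := by rw [this]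
      simp [Fin.val_succ] at this
    set E : Finset (EdgeIdx N) :=
      Finset.image (fun k : Fin L => eIdx (v k.castSucc) (v k.succ) (hne k)) Finset.univ with hE
    have hsub : {ω : EdgeConf N | Function.Injective v ∧
        ∀ k : Fin L, (graphOf ω).Adj (v k.castSucc) (v k.succ)}
        ⊆ {ω : EdgeConf N | ∀ e ∈ E, ω e = true} := by
      intro ω hω e he
      rw [hE, Finset.mem_image] at he
      obtain ⟨k, _, rfl⟩ := he
      exact eIdx_true_of_adj (hne k) (hω.2 k)
    have hinjE : Function.Injective
        (fun k : Fin L => eIdx (v k.castSucc) (v k.succ) (hne k)) := by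
      intro k m hkm
      rcases eIdx_eq_cases (hne k) (hne m) hkm with ⟨h1, h2⟩ | ⟨h1, h2⟩
      · have hk1 := hinj h1
        have : (k.castSucc : ℕ) = (m.castSucc : ℕ) := by rw [hk1]
        exact Fin.ext (by simpa using this)
      · have hk1 := hinj h1
        have hk2 := hinj h2
        have e1 : (k : ℕ) = (m : ℕ) + 1 := by
          have : (k.castSucc : ℕ) = (m.succ : ℕ) := by rw [hk1]
          simpa [Fin.val_succ] using this
        have e2 : (k : ℕ) + 1 = (m : ℕ) := by
          have : (k.succ : ℕ) = (m.castSucc : ℕ) := by rw [hk2]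
          simpa [Fin.val_succ] using this
        omega
    haveI := M.law_prob N
    calc M.law N {ω | Function.Injective v ∧
        ∀ k : Fin L, (graphOf ω).Adj (v k.castSucc) (v k.succ)}
        ≤ M.law N {ω : EdgeConf N | ∀ e ∈ E, ω e = true} := measure_mono hsub
      _ = ∏ e ∈ E, ENNReal.ofReal (M.q N e.val.1 e.val.2) :=
          measure_allTrue (M.law N) (fun e => M.q N e.val.1 e.val.2)
            (fun e => M.q_mem N e.val.1 e.val.2) (fun σ => M.law_indep N σ) E
      _ = ∏ k : Fin L, ENNReal.ofReal
            (M.q N (eIdx (v k.castSucc) (v k.succ) (hne k)).val.1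
              (eIdx (v k.castSucc) (v k.succ) (hne k)).val.2) := by
          rw [hE, Finset.prod_image (fun k _ m _ h => hinjE h)]
      _ = ∏ k : Fin L, ENNReal.ofReal (qmat M N (v k.castSucc) (v k.succ)) := by
          refine Finset.prod_congr rfl fun k _ => ?_
          rw [q_of_eIdx M N _ _ (hne k), qmat, if_neg (hne k)]
      _ = ENNReal.ofReal (∏ k : Fin L, qmat M N (v k.castSucc) (v k.succ)) :=
          (ENNReal.ofReal_prod_of_nonneg (fun k _ => qmat_nonneg M N _ _)).symm
  · have : {ω : EdgeConf N | Function.Injective v ∧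
        ∀ k : Fin L, (graphOf ω).Adj (v k.castSucc) (v k.succ)} = ∅ := by
      ext ω; simp [hinj]
    rw [this]
    simp

/-- Union bound over all tuples. -/
lemma law_bad_le (N L : ℕ) :
    M.law N {ω : EdgeConf N | ∃ i j : Fin N,
        (graphOf ω).Reachable i j ∧ L + 1 ≤ (graphOf ω).dist i j}
      ≤ ENNReal.ofReal (∑ v : Fin (L+1) → Fin N,
          ∏ k : Fin L, qmat M N (v k.castSucc) (v k.succ)) := by
  classical
  set Bv : (Fin (L+1) → Fin N) → Set (EdgeConf N) := fun v =>
    {ω | Function.Injective v ∧ ∀ k : Fin L, (graphOf ω).Adj (v k.castSucc) (v k.succ)}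
    with hBv
  have hsub : {ω : EdgeConf N | ∃ i j : Fin N,
      (graphOf ω).Reachable i j ∧ L + 1 ≤ (graphOf ω).dist i j}
      ⊆ ⋃ v ∈ (Finset.univ : Finset (Fin (L+1) → Fin N)), Bv v := by
    intro ω hω
    obtain ⟨i, j, hr, hd⟩ := hω
    obtain ⟨p, hp, hlen⟩ := hr.exists_path_of_dist
    have hL : L ≤ p.length := by omega
    set v : Fin (L+1) → Fin N := fun k => p.getVert k with hv
    have hvinj : Function.Injective v := by
      intro k m hkm
      exact Fin.ext (getVert_inj hp k (le_trans (by omega) hL) m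
        (le_trans (by omega) hL) hkm)
    have hvadj : ∀ k : Fin L, (graphOf ω).Adj (v k.castSucc) (v k.succ) := by
      intro k
      have : (k : ℕ) < p.length := by
        have := k.isLt
        omega
      have := p.adj_getVert_succ this
      simpa [hv, Fin.val_succ] using this
    exact Set.mem_biUnion (Finset.mem_univ v) ⟨hvinj, hvadj⟩
  calc M.law N {ω : EdgeConf N | ∃ i j : Fin N,
      (graphOf ω).Reachable i j ∧ L + 1 ≤ (graphOf ω).dist i j}
      ≤ M.law N (⋃ v ∈ (Finset.univ : Finset (Fin (L+1) → Fin N)), Bv v) :=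
        measure_mono hsub
    _ ≤ ∑ v : Fin (L+1) → Fin N, M.law N (Bv v) := measure_biUnion_finset_le _ _
    _ ≤ ∑ v : Fin (L+1) → Fin N, ENNReal.ofReal
          (∏ k : Fin L, qmat M N (v k.castSucc) (v k.succ)) :=
        Finset.sum_le_sum fun v _ => tuple_bound M N L v
    _ = ENNReal.ofReal (∑ v : Fin (L+1) → Fin N,
          ∏ k : Fin L, qmat M N (v k.castSucc) (v k.succ)) :=
        (ENNReal.ofReal_sum_of_nonneg (fun v _ =>
          Finset.prod_nonneg fun k _ => qmat_nonneg M N _ _)).symm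

end ModelAux


section Numeric

/-- Tangent-line (Bernoulli) step for the sum–integral comparison. -/
lemma rpow_succ_step {s : ℝ} (hs0 : 0 < s) (hs1 : s < 1) {x : ℝ} (hx : 0 ≤ x) :
    x ^ s + s * (x + 1) ^ (s - 1) ≤ (x + 1) ^ s := by
  have hx1 : (0:ℝ) < x + 1 := by linarith
  have hu0 : 0 ≤ x / (x + 1) := div_nonneg hx hx1.le
  have hgm := Real.geom_mean_le_arith_mean2_weighted hs0.le (by linarith : (0:ℝ) ≤ 1 - s)
    hu0 zero_le_one (by ring)
  rw [Real.one_rpow, mul_one, mul_one] at hgm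
  have hxs : x ^ s = (x / (x + 1)) ^ s * (x + 1) ^ s := by
    rw [← Real.mul_rpow hu0 hx1.le, div_mul_cancel₀ x (ne_of_gt hx1)]
  have hP0 : (0:ℝ) < (x + 1) ^ (s - 1) := Real.rpow_pos_of_pos hx1 _
  have hS0 : (0:ℝ) < (x + 1) ^ s := Real.rpow_pos_of_pos hx1 _
  have hSP : (x + 1) ^ s = (x + 1) ^ (s - 1) * (x + 1) := by
    rw [← Real.rpow_add_one (ne_of_gt hx1) (s - 1)]
    norm_num
  have hfrac : x / (x + 1) * ((x + 1) ^ s) = x * (x + 1) ^ (s - 1) := by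
    rw [hSP]; field_simp
  have hxs' : x ^ s ≤ s * (x * (x + 1) ^ (s - 1)) + (1 - s) * (x + 1) ^ s := by
    rw [hxs]
    calc (x / (x + 1)) ^ s * (x + 1) ^ s
        ≤ (s * (x / (x + 1)) + (1 - s)) * (x + 1) ^ s :=
          mul_le_mul_of_nonneg_right hgm hS0.le
      _ = s * (x / (x + 1) * ((x + 1) ^ s)) + (1 - s) * (x + 1) ^ s := by ring
      _ = s * (x * (x + 1) ^ (s - 1)) + (1 - s) * (x + 1) ^ s := by rw [hfrac]
  nlinarith [hSP]

lemma sum_rpow_bound {s : ℝ} (hs0 : 0 < s) (hs1 : s < 1) (N : ℕ) :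
    ∑ i : Fin N, ((i : ℕ) + 1 : ℝ) ^ (s - 1) ≤ 1 + (N : ℝ) ^ s / s := by
  induction N with
  | zero =>
    simp [Real.zero_rpow (ne_of_gt hs0)]
  | succ N ih =>
    rw [Fin.sum_univ_castSucc]
    have hlast : (((Fin.last N : Fin (N+1)) : ℕ) + 1 : ℝ) = (N : ℝ) + 1 := by
      simp
    have hterm : ∑ i : Fin N, (((i.castSucc : Fin (N+1)) : ℕ) + 1 : ℝ) ^ (s - 1)
        = ∑ i : Fin N, ((i : ℕ) + 1 : ℝ) ^ (s - 1) := by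
      refine Finset.sum_congr rfl fun i _ => by simp
    rw [hterm, hlast]
    have hstep := rpow_succ_step hs0 hs1 (Nat.cast_nonneg N)
    have hcast : ((N + 1 : ℕ) : ℝ) = (N : ℝ) + 1 := by push_cast; ring
    rw [hcast]
    have hkey : ((N : ℝ) + 1) ^ (s - 1) ≤ ((N : ℝ) + 1) ^ s / s - (N : ℝ) ^ s / s := by
      rw [le_sub_iff_add_le, ← sub_nonneg]
      have heq : ((N:ℝ) + 1) ^ s / s - (((N:ℝ) + 1) ^ (s - 1) + (N:ℝ) ^ s / s)
          = (((N:ℝ) + 1) ^ s - ((N:ℝ) ^ s + s * ((N:ℝ) + 1) ^ (s - 1))) / s := by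
        field_simp
        ring
      rw [heq]
      apply div_nonneg _ hs0.le
      linarith
    linarith

end Numeric

/-- **Proposition (diameter).** For `G_N ∈ 𝒢_{β,γ}` with `β + 2γ < 1`, the maximal
component diameter is `O_P(log N)`: there is a constant `C` such that with probability
tending to 1 every component has diameter at most `C log N`. -/
theorem component_diameter_log (β γ : ℝ) (hβ : 0 < β) (hγ : 0 < γ)
    (hsub : β + 2 * γ < 1) (M : IRGModel β γ) :
    ∃ C : ℝ, 0 < C ∧ Tendsto (fun N => M.law N
      {ω | ∀ i j : Fin N, (graphOf ω).Reachable i j →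
        ((graphOf ω).dist i j : ℝ) ≤ C * Real.log N}) atTop (nhds 1) := by
  classical
  have hs0 : (0:ℝ) < 1 - 2 * γ := by linarith
  have hs1 : 1 - 2 * γ < 1 := by linarith
  set ρ : ℝ := β / (1 - 2 * γ) with hρ
  have hρ0 : 0 < ρ := div_pos hβ hs0
  have hρ1 : ρ < 1 := (div_lt_one hs0).mpr (by linarith)
  set r : ℝ := (1 + ρ) / 2 with hrdef
  have hr0 : 0 < r := by rw [hrdef]; linarith
  have hr1 : r < 1 := by rw [hrdef]; linarith
  have hρr : ρ < r := by rw [hrdef]; linarith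
  have hlogr : Real.log r < 0 := Real.log_neg hr0 hr1
  set C : ℝ := 2 / (-Real.log r) with hCdef
  have hC0 : 0 < C := div_pos two_pos (by linarith)
  refine ⟨C, hC0, ?_⟩
  -- notation
  set eps : ℕ → ℝ := fun N => ∑ i : Fin N, ∑ j : Fin N,
    if i ≠ j then (pCL β γ N i j - M.q N i j) ^ 2 / pCL β γ N i j else 0 with hepsdef
  have heps : Tendsto eps atTop (nhds 0) := M.q_approx
  have heps0 : ∀ N, 0 ≤ eps N := by
    intro N
    refine Finset.sum_nonneg fun i _ => Finset.sum_nonneg fun j _ => ?_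
    split_ifs with h
    · apply div_nonneg (sq_nonneg _)
      apply le_min _ zero_le_one
      have : (0:ℝ) ≤ (N:ℝ) ^ (2*γ-1) := Real.rpow_nonneg (Nat.cast_nonneg N) _
      positivity
    · exact le_refl 0
  -- weight vectors & error matrices
  set wv : ∀ N : ℕ, Fin N → ℝ := fun N i => (((i:ℕ) + 1 : ℝ)) ^ (-γ) with hwv
  set Dm : ∀ N : ℕ, Fin N → Fin N → ℝ := fun N x y =>
    if x = y then 0 else |M.q N x y - pCL β γ N x y| with hDm
  set cN : ℕ → ℝ := fun N => β * (N:ℝ) ^ (2*γ - 1) with hcN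
  have hcN0 : ∀ N, 0 ≤ cN N := fun N =>
    mul_nonneg hβ.le (Real.rpow_nonneg (Nat.cast_nonneg N) _)
  have hw0 : ∀ N (x : Fin N), 0 ≤ wv N x := fun N x =>
    Real.rpow_nonneg (by positivity) _
  have hD0 : ∀ N (x y : Fin N), 0 ≤ Dm N x y := by
    intro N x y
    simp only [hDm]
    split_ifs
    · exact le_refl 0
    · exact abs_nonneg _
  have hQ0 : ∀ N (x y : Fin N), 0 ≤ qmat M N x y := fun N x y => qmat_nonneg M N x y
  have hp_pos : ∀ (N : ℕ) (x y : Fin N), 0 < pCL β γ N x y := by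
    intro N x y
    have hN0 : 0 < (N:ℝ) := by
      have := x.isLt
      have : 0 < N := by omega
      exact_mod_cast this
    apply lt_min _ one_pos
    have h1 : (0:ℝ) < (N:ℝ) ^ (2*γ-1) := Real.rpow_pos_of_pos hN0 _
    have h2 : (0:ℝ) < (((x:ℕ) + 1 : ℝ)) ^ (-γ) := Real.rpow_pos_of_pos (by positivity) _
    have h3 : (0:ℝ) < (((y:ℕ) + 1 : ℝ)) ^ (-γ) := Real.rpow_pos_of_pos (by positivity) _
    positivity
  have hQle : ∀ N (x y : Fin N), qmat M N x y ≤ cN N * wv N x * wv N y + Dm N x y := by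
    intro N x y
    simp only [qmat, hDm]
    by_cases h : x = y
    · simp only [h, if_pos rfl, add_zero]
      have h1 := hw0 N y
      have h2 := hw0 N x
      have h3 := hcN0 N
      have : 0 ≤ cN N * wv N y * wv N y := by positivity
      simpa [h] using this
    · rw [if_neg h, if_neg h]
      have habs : M.q N x y - pCL β γ N x y ≤ |M.q N x y - pCL β γ N x y| := le_abs_self _
      have hple : pCL β γ N x y ≤ cN N * wv N x * wv N y := by
        simp only [pCL, hcN, hwv]
        refine le_trans (min_le_left _ _) (le_of_eq ?_)
        ring
      linarith
  -- Frobenius bound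
  have hDsq : ∀ N, (∑ x : Fin N, ∑ y : Fin N, Dm N x y ^ 2) ≤ eps N := by
    intro N
    simp only [hepsdef, hDm]
    refine Finset.sum_le_sum fun x _ => Finset.sum_le_sum fun y _ => ?_
    by_cases h : x = y
    · simp [h]
    · rw [if_neg h, if_pos h, sq_abs]
      have hp0 := hp_pos N x y
      have hp1 : pCL β γ N x y ≤ 1 := min_le_right _ _
      have hsq : (M.q N x y - pCL β γ N x y) ^ 2 = (pCL β γ N x y - M.q N x y) ^ 2 := by
        ring
      rw [hsq]
      calc (pCL β γ N x y - M.q N x y) ^ 2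
          = (pCL β γ N x y - M.q N x y) ^ 2 / pCL β γ N x y * pCL β γ N x y := by
            field_simp
        _ ≤ (pCL β γ N x y - M.q N x y) ^ 2 / pCL β γ N x y * 1 := by
            apply mul_le_mul_of_nonneg_left hp1
            positivity
        _ = (pCL β γ N x y - M.q N x y) ^ 2 / pCL β γ N x y := mul_one _
  -- sum of squared weights
  have hW2 : ∀ N : ℕ, (∑ y : Fin N, wv N y ^ 2) ≤ 1 + (N:ℝ) ^ (1 - 2*γ) / (1 - 2*γ) := by
    intro N
    have hterm : ∀ y : Fin N, wv N y ^ 2 = (((y:ℕ) + 1 : ℝ)) ^ ((1 - 2*γ) - 1) := by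
      intro y
      simp only [hwv]
      have hy : (0:ℝ) < ((y:ℕ) + 1 : ℝ) := by positivity
      rw [← Real.rpow_natCast ((((y:ℕ) + 1 : ℝ)) ^ (-γ)) 2, ← Real.rpow_mul hy.le]
      congr 1
      push_cast
      ring
    rw [Finset.sum_congr rfl fun y _ => hterm y]
    exact sum_rpow_bound hs0 hs1 N
  -- the contraction bound
  have hKle : ∀ N : ℕ, 1 ≤ N →
      cN N * (∑ y : Fin N, wv N y ^ 2)
        + Real.sqrt (∑ x : Fin N, ∑ y : Fin N, Dm N x y ^ 2)
      ≤ ρ + (β * (N:ℝ) ^ (2*γ - 1) + Real.sqrt (eps N)) := by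
    intro N hN1
    have hN0 : (0:ℝ) < N := by exact_mod_cast hN1
    have h1 : cN N * (∑ y : Fin N, wv N y ^ 2)
        ≤ β * (N:ℝ) ^ (2*γ - 1) + ρ := by
      calc cN N * (∑ y : Fin N, wv N y ^ 2)
          ≤ cN N * (1 + (N:ℝ) ^ (1 - 2*γ) / (1 - 2*γ)) :=
            mul_le_mul_of_nonneg_left (hW2 N) (hcN0 N)
        _ = β * (N:ℝ) ^ (2*γ - 1)
            + β * ((N:ℝ) ^ (2*γ - 1) * (N:ℝ) ^ (1 - 2*γ)) / (1 - 2*γ) := by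
            simp only [hcN]; ring
        _ = β * (N:ℝ) ^ (2*γ - 1) + ρ := by
            rw [← Real.rpow_add hN0]
            norm_num
            exact hρ.symm
    have h2 : Real.sqrt (∑ x : Fin N, ∑ y : Fin N, Dm N x y ^ 2) ≤ Real.sqrt (eps N) :=
      Real.sqrt_le_sqrt (hDsq N)
    linarith
  -- the error tends to 0
  have hδ : Tendsto (fun N : ℕ => β * (N:ℝ) ^ (2*γ - 1) + Real.sqrt (eps N))
      atTop (nhds 0) := by
    have h1 : Tendsto (fun N : ℕ => (N:ℝ) ^ (2*γ - 1)) atTop (nhds 0) := by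
      have := (tendsto_rpow_neg_atTop hs0).comp tendsto_natCast_atTop_atTop
      refine this.congr fun N => ?_
      simp only [Function.comp_apply]
      congr 1
      ring
    have h1' : Tendsto (fun N : ℕ => β * (N:ℝ) ^ (2*γ - 1)) atTop (nhds 0) := by
      have := h1.const_mul β
      simpa using this
    have h2 : Tendsto (fun N : ℕ => Real.sqrt (eps N)) atTop (nhds 0) := by
      have := heps.sqrt
      simpa using this
    have := h1'.add h2
    simpa using this
  -- the bad events
  set Bad : ∀ N : ℕ, Set (EdgeConf N) := fun N =>
    {ω | ∃ i j : Fin N, (graphOf ω).Reachable i j ∧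
      C * Real.log N < ((graphOf ω).dist i j : ℝ)} with hBad
  -- eventual bound on the measure of the bad event
  have hub : ∀ᶠ N : ℕ in atTop,
      M.law N (Bad N) ≤ ENNReal.ofReal ((1/r) * (N:ℝ) ^ (-(1:ℝ))) := by
    have hev2 : ∀ᶠ N : ℕ in atTop,
        β * (N:ℝ) ^ (2*γ - 1) + Real.sqrt (eps N) < r - ρ :=
      hδ.eventually (gt_mem_nhds (by linarith : (0:ℝ) < r - ρ))
    filter_upwards [eventually_ge_atTop 1, hev2] with N hN1 hN2
    have hN0 : (0:ℝ) < N := by exact_mod_cast hN1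
    have hlogN : 0 ≤ Real.log N := Real.log_nonneg (by exact_mod_cast hN1)
    have hCL0 : 0 ≤ C * Real.log N := mul_nonneg hC0.le hlogN
    set LL : ℕ := ⌊C * Real.log N⌋₊ with hLL
    -- inclusion into the long-path event
    have hsub : Bad N ⊆ {ω : EdgeConf N | ∃ i j : Fin N,
        (graphOf ω).Reachable i j ∧ LL + 1 ≤ (graphOf ω).dist i j} := by
      rintro ω ⟨i, j, hrch, hd⟩
      refine ⟨i, j, hrch, ?_⟩
      have : LL < (graphOf ω).dist i j := (Nat.floor_lt hCL0).mpr hd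
      omega
    -- contraction constant
    have hKr : cN N * (∑ y : Fin N, wv N y ^ 2)
        + Real.sqrt (∑ x : Fin N, ∑ y : Fin N, Dm N x y ^ 2) ≤ r := by
      have := hKle N hN1
      linarith
    have hK0 : 0 ≤ cN N * (∑ y : Fin N, wv N y ^ 2)
        + Real.sqrt (∑ x : Fin N, ∑ y : Fin N, Dm N x y ^ 2) := by
      apply add_nonneg
      · exact mul_nonneg (hcN0 N) (Finset.sum_nonneg fun y _ => sq_nonneg _)
      · exact Real.sqrt_nonneg _
    -- the path sum bound
    have hps : ∑ v : Fin (LL+1) → Fin N,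
        ∏ k : Fin LL, qmat M N (v k.castSucc) (v k.succ) ≤ (N:ℝ) * r ^ LL := by
      calc ∑ v : Fin (LL+1) → Fin N,
            ∏ k : Fin LL, qmat M N (v k.castSucc) (v k.succ)
          ≤ (N:ℝ) * (cN N * (∑ y : Fin N, wv N y ^ 2)
              + Real.sqrt (∑ x : Fin N, ∑ y : Fin N, Dm N x y ^ 2)) ^ LL :=
            pathSum_le (qmat M N) (Dm N) (wv N) (cN N) (hQ0 N) (hQle N) (hD0 N)
              (hw0 N) (hcN0 N) LL
        _ ≤ (N:ℝ) * r ^ LL := by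
            apply mul_le_mul_of_nonneg_left _ hN0.le
            exact pow_le_pow_left₀ hK0 hKr LL
    -- numeric estimate
    have hnum : (N:ℝ) * r ^ LL ≤ (1/r) * (N:ℝ) ^ (-(1:ℝ)) := by
      have hexp : C * Real.log N - 1 ≤ (LL:ℝ) := by
        have := Nat.lt_floor_add_one (C * Real.log N)
        push_cast
        linarith
      have h6a : (r:ℝ) ^ (LL:ℕ) ≤ r ^ (C * Real.log N - 1) := by
        rw [← Real.rpow_natCast r LL]
        exact Real.rpow_le_rpow_of_exponent_ge hr0 hr1.le hexp
      have h6b : r ^ (C * Real.log N - 1) = (N:ℝ) ^ (-(2:ℝ)) / r := by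
        rw [Real.rpow_sub hr0, Real.rpow_one]
        congr 1
        rw [Real.rpow_def_of_pos hr0, Real.rpow_def_of_pos hN0]
        congr 1
        have hlr : Real.log r ≠ 0 := ne_of_lt hlogr
        rw [hCdef]
        field_simp [hlr]
      have hN12 : (N:ℝ) * (N:ℝ) ^ (-(2:ℝ)) = (N:ℝ) ^ (-(1:ℝ)) := by
        nth_rewrite 1 [← Real.rpow_one (N:ℝ)]
        rw [← Real.rpow_add hN0]
        norm_num
      calc (N:ℝ) * r ^ LL ≤ (N:ℝ) * ((N:ℝ) ^ (-(2:ℝ)) / r) := by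
            apply mul_le_mul_of_nonneg_left _ hN0.le
            rw [← h6b]
            exact h6a
        _ = (1/r) * ((N:ℝ) * (N:ℝ) ^ (-(2:ℝ))) := by ring
        _ = (1/r) * (N:ℝ) ^ (-(1:ℝ)) := by rw [hN12]
    calc M.law N (Bad N)
        ≤ M.law N {ω : EdgeConf N | ∃ i j : Fin N,
            (graphOf ω).Reachable i j ∧ LL + 1 ≤ (graphOf ω).dist i j} :=
          measure_mono hsub
      _ ≤ ENNReal.ofReal (∑ v : Fin (LL+1) → Fin N,
            ∏ k : Fin LL, qmat M N (v k.castSucc) (v k.succ)) := law_bad_le M N LL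
      _ ≤ ENNReal.ofReal ((1/r) * (N:ℝ) ^ (-(1:ℝ))) :=
          ENNReal.ofReal_le_ofReal (hps.trans hnum)
  -- the upper bound tends to 0
  have hU : Tendsto (fun N : ℕ => ENNReal.ofReal ((1/r) * (N:ℝ) ^ (-(1:ℝ))))
      atTop (nhds 0) := by
    have h1 : Tendsto (fun N : ℕ => (1/r) * (N:ℝ) ^ (-(1:ℝ))) atTop (nhds 0) := by
      have := ((tendsto_rpow_neg_atTop one_pos).comp tendsto_natCast_atTop_atTop).const_mul (1/r)
      simpa using this
    have := ENNReal.tendsto_ofReal h1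
    simpa using this
  have hbad : Tendsto (fun N => M.law N (Bad N)) atTop (nhds 0) :=
    tendsto_of_tendsto_of_tendsto_of_le_of_le' tendsto_const_nhds hU
      (Eventually.of_forall fun N => zero_le) hub
  -- pass to the complement
  have hcompl : ∀ N : ℕ, {ω : EdgeConf N | ∀ i j : Fin N, (graphOf ω).Reachable i j →
      ((graphOf ω).dist i j : ℝ) ≤ C * Real.log N} = (Bad N)ᶜ := by
    intro N
    ext ω
    simp only [hBad, Set.mem_setOf_eq, Set.mem_compl_iff, not_exists, not_and, not_lt]
  have hfinal : Tendsto (fun N => 1 - M.law N (Bad N)) atTop (nhds (1 - 0)) :=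
    ENNReal.Tendsto.sub tendsto_const_nhds hbad (Or.inl ENNReal.one_ne_top)
  rw [tsub_zero] at hfinal
  refine hfinal.congr fun N => ?_
  haveI := M.law_prob N
  rw [← prob_compl_eq_one_sub (edgeConf_measurable (Bad N)), ← hcompl N]

end VoterIRG
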